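/- Let A be a closed subalgebra of C(X) separating points and containing constants, P a closed subset of X with P = ⋂{H : H clopen, χ_H ∈ A, P ⊆ H}. Then every clopen subset of P whose characteristic function lies in A↾P has the form H ∩ P for some clopen H ⊆ X with χ_H ∈ A. -/

import Mathlib

open Classical Set

/-- `χ_H ∈ A`: the characteristic function of `H` belongs to `A`. -/
noncomputable def chiMem {X : Type*} [TopologicalSpace X]
    (A : Subalgebra ℂ C(X, ℂ)) (H : Set X) : Prop :=
  ∃ g ∈ A, ∀ x, g x = if x ∈ H then (1 : ℂ) else 0

lemma chiMem_univ {X : Type*} [TopologicalSpace X] (A : Subalgebra ℂ C(X, ℂ)) :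
    chiMem A (univ : Set X) :=
  ⟨1, A.one_mem, fun x => by simp⟩

lemma chiMem_inter {X : Type*} [TopologicalSpace X] {A : Subalgebra ℂ C(X, ℂ)}
    {H H' : Set X} (h : chiMem A H) (h' : chiMem A H') : chiMem A (H ∩ H') := by
  obtain ⟨g, hg, hgv⟩ := h
  obtain ⟨g', hg', hgv'⟩ := h'
  refine ⟨g * g', A.mul_mem hg hg', fun x => ?_⟩
  rw [ContinuousMap.mul_apply, hgv, hgv']
  by_cases hx : x ∈ H <;> by_cases hx' : x ∈ H' <;> simp [hx, hx']

lemma step_bound (w c : ℂ) (hc : c = 0 ∨ c = 1) (e : ℝ) (he : ‖w - c‖ ≤ e) (he' : e ≤ 1/10) :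
    ‖3*w^2 - 2*w^3 - c‖ ≤ e/2 := by
  have h0 : (0:ℝ) ≤ e := le_trans (norm_nonneg _) he
  rcases hc with rfl | rfl
  · have h1 : 3*w^2 - 2*w^3 - 0 = w^2 * (3 - 2*w) := by ring
    rw [h1, norm_mul, norm_pow]
    have hw : ‖w‖ ≤ e := by simpa using he
    have h2 : ‖3 - 2*w‖ ≤ 3.2 := by
      calc ‖3 - 2*w‖ ≤ ‖(3:ℂ)‖ + ‖2*w‖ := norm_sub_le _ _
        _ ≤ 3 + 2 * (1/10) := by
            rw [norm_mul]; simp only [Complex.norm_ofNat]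
            gcongr
            exact le_trans hw he'
        _ ≤ 3.2 := by norm_num
    calc ‖w‖^2 * ‖3 - 2*w‖ ≤ (e * (1/10)) * 3.2 := by
          rw [sq]; gcongr; exact le_trans hw he'
      _ ≤ e/2 := by nlinarith
  · have h1 : 3*w^2 - 2*w^3 - 1 = -((w-1)^2 * (2*w+1)) := by ring
    rw [h1, norm_neg, norm_mul, norm_pow]
    have h2 : ‖2*w+1‖ ≤ 3.2 := by
      have h3 : 2*w + 1 = 2*(w-1) + 3 := by ring
      rw [h3]
      calc ‖2*(w-1)+3‖ ≤ ‖2*(w-1)‖ + ‖(3:ℂ)‖ := norm_add_le _ _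
        _ ≤ 2*(1/10) + 3 := by
            rw [norm_mul]; simp only [Complex.norm_ofNat]
            gcongr
            exact le_trans he he'
        _ ≤ 3.2 := by norm_num
    calc ‖w-1‖^2 * ‖2*w+1‖ ≤ (e * (1/10)) * 3.2 := by
          rw [sq]; gcongr; exact le_trans he he'
      _ ≤ e/2 := by nlinarith

/-- Key lemma: if `g ∈ A` (closed subalgebra) takes values within `1/10` of `{0,1}`,
then the set `H = {x | ‖g x - 1‖ ≤ 1/10}` is clopen and `χ_H ∈ A`. -/
lemma chi_of_small {X : Type*} [TopologicalSpace X] [CompactSpace X]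
    {A : Subalgebra ℂ C(X, ℂ)} (hAcl : IsClosed (A : Set C(X, ℂ)))
    {g : C(X, ℂ)} (hg : g ∈ A)
    (hgv : ∀ x, ‖g x‖ ≤ 1/10 ∨ ‖g x - 1‖ ≤ 1/10) :
    IsClopen {x | ‖g x - 1‖ ≤ 1/10} ∧ chiMem A {x | ‖g x - 1‖ ≤ 1/10} := by
  set H := {x | ‖g x - 1‖ ≤ 1/10} with hHdef
  have hcont : Continuous fun x => ‖g x - 1‖ := (g.continuous.sub continuous_const).norm
  have hHeq : H = {x | ‖g x - 1‖ < 1/2} := by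
    ext x
    simp only [hHdef, mem_setOf_eq]
    constructor
    · intro hx; exact lt_of_le_of_lt hx (by norm_num)
    · intro hx
      rcases hgv x with h | h
      · exfalso
        have h1 := norm_add_le (g x) (1 - g x)
        have h2 : g x + (1 - g x) = 1 := by ring
        rw [h2, norm_one] at h1
        have h3 : ‖(1:ℂ) - g x‖ = ‖g x - 1‖ := norm_sub_rev _ _
        linarith
      · exact h
  have hHclopen : IsClopen H := by
    constructor
    · exact isClosed_le hcont continuous_const
    · rw [hHeq]; exact isOpen_lt hcont continuous_const
  refine ⟨hHclopen, ?_⟩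
  -- the characteristic function of H, as a continuous map
  set h : C(X, ℂ) := ⟨fun x => if x ∈ H then (1:ℂ) else 0, by
    apply Continuous.if ?_ continuous_const continuous_const
    intro a ha
    simp only [Set.setOf_mem_eq, hHclopen.frontier_eq] at ha
    exact absurd ha (notMem_empty a)⟩ with hhdef
  -- the iteration
  set seq : ℕ → C(X, ℂ) := fun n => (fun u => (3:ℂ) • u^2 - (2:ℂ) • u^3)^[n] g with hseq
  have hseq0 : seq 0 = g := rfl
  have hseqS : ∀ n, seq (n+1) = (3:ℂ) • (seq n)^2 - (2:ℂ) • (seq n)^3 := by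
    intro n
    simp only [hseq, Function.iterate_succ_apply']
  have hmem : ∀ n, seq n ∈ A := by
    intro n
    induction n with
    | zero => exact hg
    | succ n ih =>
        rw [hseqS]
        exact A.sub_mem (A.smul_mem (pow_mem ih 2) 3) (A.smul_mem (pow_mem ih 3) 2)
  have happ : ∀ n x, seq (n+1) x = 3 * (seq n x)^2 - 2 * (seq n x)^3 := by
    intro n x
    rw [hseqS]
    simp [smul_eq_mul]
  have hbound : ∀ n, ∀ x, ‖seq n x - h x‖ ≤ (1/10) * (1/2)^n := by
    intro n
    induction n with
    | zero =>
        intro x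
        simp only [hseq0, pow_zero, mul_one]
        by_cases hx : x ∈ H
        · have : h x = 1 := by simp [hhdef, hx]
          rw [this]
          exact hx
        · have hv : h x = 0 := by simp [hhdef, hx]
          rw [hv, sub_zero]
          rcases hgv x with hcase | hcase
          · exact hcase
          · exact absurd hcase hx
    | succ n ih =>
        intro x
        rw [happ]
        have hc : h x = 0 ∨ h x = 1 := by
          by_cases hx : x ∈ H <;> simp [hhdef, hx]
        have he' : (1/10 : ℝ) * (1/2)^n ≤ 1/10 := by
          have : ((1:ℝ)/2)^n ≤ 1 := pow_le_one₀ (by norm_num) (by norm_num)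
          nlinarith
        have := step_bound (seq n x) (h x) hc _ (ih x) he'
        calc ‖3 * seq n x ^ 2 - 2 * seq n x ^ 3 - h x‖ ≤ (1/10 * (1/2)^n) / 2 := this
          _ = 1/10 * (1/2)^(n+1) := by ring
  have htend : Filter.Tendsto seq Filter.atTop (nhds h) := by
    rw [tendsto_iff_dist_tendsto_zero]
    apply squeeze_zero (g := fun n => (1/10:ℝ) * (1/2)^n) (fun n => dist_nonneg) ?_ ?_
    · intro n
      rw [ContinuousMap.dist_le (by positivity)]
      intro x
      rw [dist_eq_norm]
      exact hbound n x
    · have h2 : Filter.Tendsto (fun n : ℕ => ((1:ℝ)/2)^n) Filter.atTop (nhds 0) :=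
        tendsto_pow_atTop_nhds_zero_of_lt_one (by norm_num) (by norm_num)
      have := h2.const_mul (1/10 : ℝ)
      simpa using this
  have hhA : h ∈ A := hAcl.mem_of_tendsto htend (Filter.Eventually.of_forall hmem)
  exact ⟨h, hhA, fun x => rfl⟩

/-- If `A ≤ C(X, ℂ)` is a closed subalgebra separating points, and `P` is a closed subset of
`X` with `P = ⋂ {H : H clopen, χ_H ∈ A, P ⊆ H}`, then every clopen subset `K` of `P`
whose characteristic function lies in `A↾P` is of the form `H ∩ P` for some clopen
`H ⊆ X` with `χ_H ∈ A`. -/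
theorem stmt5 {X : Type*} [TopologicalSpace X] [CompactSpace X] [T2Space X]
    (A : Subalgebra ℂ C(X, ℂ)) (hA : A.SeparatesPoints)
    (hAcl : IsClosed (A : Set C(X, ℂ)))
    (P : Set X) (hP : IsClosed P)
    (hPt : P = ⋂₀ {H : Set X | IsClopen H ∧ chiMem A H ∧ P ⊆ H})
    (K : Set P) (hK : IsClopen K)
    (hchi : ∃ f ∈ A, ∀ x : P, f.restrict P x = if x ∈ K then (1 : ℂ) else 0) :
    ∃ H : Set X, IsClopen H ∧ chiMem A H ∧ K = Subtype.val ⁻¹' H := by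
  obtain ⟨f, hfA, hf⟩ := hchi
  have hfP : ∀ x : P, f (x : X) = if x ∈ K then (1:ℂ) else 0 := fun x => hf x
  set F := {H : Set X | IsClopen H ∧ chiMem A H ∧ P ⊆ H} with hF
  -- the open set V where f is within 1/10 of {0,1}
  set V := {x | ‖f x‖ < 1/10 ∨ ‖f x - 1‖ < 1/10} with hV
  have hVopen : IsOpen V := by
    apply IsOpen.union
    · exact isOpen_lt f.continuous.norm continuous_const
    · exact isOpen_lt (f.continuous.sub continuous_const).norm continuous_const
  have hPV : P ⊆ V := by
    intro x hx
    have := hfP ⟨x, hx⟩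
    by_cases hk : (⟨x, hx⟩ : P) ∈ K
    · right; simp only [hk, if_true] at this; simp [hV, this]
    · left; simp only [hk, if_false] at this; simp [hV, this]
  -- compactness: find H₀ ∈ F with H₀ ⊆ V
  have hVc : IsCompact (Vᶜ) := hVopen.isClosed_compl.isCompact
  have hcover : Vᶜ ⊆ ⋃ (H : F), ((H : Set X))ᶜ := by
    intro x hx
    have hxP : x ∉ P := fun h => hx (hPV h)
    rw [hPt] at hxP
    simp only [mem_sInter, not_forall] at hxP
    obtain ⟨H, hHF, hxH⟩ := hxP
    exact mem_iUnion.2 ⟨⟨H, hHF⟩, hxH⟩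
  obtain ⟨t, ht⟩ := hVc.elim_finite_subcover (fun H : F => ((H : Set X))ᶜ)
    (fun H => H.2.1.isClosed.isOpen_compl) hcover
  set H₀ : Set X := ⋂ H ∈ t, (H : Set X) with hH₀
  have hFin : ∀ s : Finset F, (⋂ H ∈ s, (H : Set X)) ∈ F := by
    intro s
    classical
    induction s using Finset.induction with
    | empty =>
        simp only [Finset.notMem_empty, iInter_of_empty, iInter_univ]
        exact ⟨isClopen_univ, chiMem_univ A, subset_univ P⟩
    | insert _ _ hnotmem ih =>
        rename_i a s
        rw [Finset.set_biInter_insert]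
        obtain ⟨h1, h2, h3⟩ := ih
        exact ⟨a.2.1.inter h1, chiMem_inter a.2.2.1 h2, subset_inter a.2.2.2 h3⟩
  have hH₀F : H₀ ∈ F := hFin t
  have hH₀V : H₀ ⊆ V := by
    intro x hx
    by_contra hxV
    obtain ⟨H, hHt, hxH⟩ := by
      have := ht hxV
      simpa only [mem_iUnion, exists_prop] using this
    exact hxH (by exact mem_iInter₂.1 hx H hHt)
  -- χ_{H₀}
  obtain ⟨g₀, hg₀A, hg₀v⟩ := hH₀F.2.1
  set g : C(X, ℂ) := f * g₀ with hg
  have hgA : g ∈ A := A.mul_mem hfA hg₀A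
  have hgv : ∀ x, ‖g x‖ ≤ 1/10 ∨ ‖g x - 1‖ ≤ 1/10 := by
    intro x
    by_cases hx : x ∈ H₀
    · have hgx : g x = f x := by
        rw [hg, ContinuousMap.mul_apply, hg₀v, if_pos hx, mul_one]
      rcases hH₀V hx with h | h
      · left; rw [hgx]; exact h.le
      · right; rw [hgx]; exact h.le
    · left
      rw [hg, ContinuousMap.mul_apply, hg₀v, if_neg hx, mul_zero, norm_zero]
      norm_num
  obtain ⟨hHclopen, hHchi⟩ := chi_of_small hAcl hgA hgv
  refine ⟨{x | ‖g x - 1‖ ≤ 1/10}, hHclopen, hHchi, ?_⟩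
  -- K = val ⁻¹' H
  ext x
  have hxH₀ : (x : X) ∈ H₀ := hH₀F.2.2 x.2
  have hgx : g (x : X) = f (x : X) := by
    rw [hg, ContinuousMap.mul_apply, hg₀v, if_pos hxH₀, mul_one]
  simp only [mem_preimage, mem_setOf_eq, hgx, hfP x]
  by_cases hk : x ∈ K
  · simp only [hk, if_true, sub_self, norm_zero, iff_true]
    norm_num
  · simp only [hk, if_false, zero_sub, norm_neg, norm_one, iff_false]
    norm_num
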